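/- The polynomial f(x) = x^{14} + 2x^{13} + x^{12} − 4x^{10} − 8x^{9} − 10x^{8} − 13x^{7} − 10x^{6} − 8x^{5} − 4x^{4} + x^{2} + 2x + 1 is irreducible over ℚ, and for every complex root α of f, the number (α − 1)^{−1} is not an algebraic integer. -/

import Mathlib

open Polynomial

/-- The polynomial whose roots are the meridian eigenvalues coming from
`1/2`-surgery on the figure-eight knot. -/
noncomputable def f41half : Polynomial ℤ :=
  Polynomial.X ^ 14 + 2 * Polynomial.X ^ 13 + Polynomial.X ^ 12 - 4 * Polynomial.X ^ 10 -
    8 * Polynomial.X ^ 9 - 10 * Polynomial.X ^ 8 - 13 * Polynomial.X ^ 7 -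
    10 * Polynomial.X ^ 6 - 8 * Polynomial.X ^ 5 - 4 * Polynomial.X ^ 4 +
    Polynomial.X ^ 2 + 2 * Polynomial.X + 1

namespace F41Aux

open Polynomial

/-! ### Generic lemmas over finite fields -/

lemma dvd_X_pow_card {p : ℕ} [Fact p.Prime] {g : (ZMod p)[X]} (hg : Irreducible g) :
    g ∣ X ^ p ^ g.natDegree - X := by
  have h0 : g ≠ 0 := hg.ne_zero
  haveI := Fact.mk hg
  haveI : Fintype (AdjoinRoot g) := Module.fintypeOfFintype (AdjoinRoot.powerBasis h0).basis
  have hcard : Fintype.card (AdjoinRoot g) = p ^ g.natDegree := by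
    have h := Module.card_eq_pow_finrank (K := ZMod p) (V := AdjoinRoot g)
    rwa [ZMod.card, (AdjoinRoot.powerBasis h0).finrank, AdjoinRoot.powerBasis_dim] at h
  have hroot : (AdjoinRoot.root g) ^ p ^ g.natDegree = AdjoinRoot.root g := by
    have h := FiniteField.pow_card (AdjoinRoot.root g)
    rwa [hcard] at h
  have hmk : AdjoinRoot.mk g (X ^ p ^ g.natDegree - X) = 0 := by
    rw [map_sub, map_pow, AdjoinRoot.mk_X]
    exact sub_eq_zero_of_eq hroot
  exact AdjoinRoot.mk_eq_zero.mp hmk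

lemma natDegree_pos_of_irr {k : Type*} [Field k] {q : k[X]} (hq : Irreducible q) :
    0 < q.natDegree := by
  rcases Nat.eq_zero_or_pos q.natDegree with h | h
  · exfalso
    apply hq.not_isUnit
    rw [Polynomial.eq_C_of_natDegree_eq_zero h]
    refine Polynomial.isUnit_C.mpr (isUnit_iff_ne_zero.mpr ?_)
    intro hc
    apply hq.ne_zero
    rw [Polynomial.eq_C_of_natDegree_eq_zero h, hc, map_zero]
  · exact h

lemma isUnit_of_natDegree_zero {k : Type*} [Field k] {a : k[X]} (h0 : a ≠ 0)
    (h : a.natDegree = 0) : IsUnit a := by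
  rw [Polynomial.eq_C_of_natDegree_eq_zero h]
  refine Polynomial.isUnit_C.mpr (isUnit_iff_ne_zero.mpr ?_)
  intro hc
  apply h0
  rw [Polynomial.eq_C_of_natDegree_eq_zero h, hc, map_zero]

lemma irreducible_of_big_factors {k : Type*} [Field k] {P : k[X]} (hm : P.Monic) {n t : ℕ}
    (hdeg : P.natDegree = n) (hn : 0 < n) (hnt : n ≤ 2 * t + 1)
    (hbig : ∀ q : k[X], Irreducible q → q ∣ P → t < q.natDegree) : Irreducible P := by
  constructor
  · intro hu
    have := Polynomial.natDegree_eq_zero_of_isUnit hu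
    omega
  intro a b hab
  by_contra hcon
  push_neg at hcon
  obtain ⟨hau, hbu⟩ := hcon
  have hP0 : P ≠ 0 := hm.ne_zero
  have ha0 : a ≠ 0 := by rintro rfl; rw [zero_mul] at hab; exact hP0 hab
  have hb0 : b ≠ 0 := by rintro rfl; rw [mul_zero] at hab; exact hP0 hab
  have hda : 0 < a.natDegree := by
    rcases Nat.eq_zero_or_pos a.natDegree with h | h
    · exact absurd (isUnit_of_natDegree_zero ha0 h) hau
    · exact h
  have hdb : 0 < b.natDegree := by
    rcases Nat.eq_zero_or_pos b.natDegree with h | h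
    · exact absurd (isUnit_of_natDegree_zero hb0 h) hbu
    · exact h
  have hsum : a.natDegree + b.natDegree = n := by
    rw [← hdeg, hab, Polynomial.natDegree_mul ha0 hb0]
  rcases (by omega : a.natDegree ≤ t ∨ b.natDegree ≤ t) with h | h
  · obtain ⟨q, hqi, hqd⟩ := WfDvdMonoid.exists_irreducible_factor hau ha0
    have h1 := hbig q hqi (hqd.trans (Dvd.intro b hab.symm))
    have h2 := Polynomial.natDegree_le_of_dvd hqd ha0
    omega
  · obtain ⟨q, hqi, hqd⟩ := WfDvdMonoid.exists_irreducible_factor hbu hb0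
    have h1 := hbig q hqi (hqd.trans (Dvd.intro_left a hab.symm))
    have h2 := Polynomial.natDegree_le_of_dvd hqd hb0
    omega

lemma factors_big {p : ℕ} [Fact p.Prime] {P : (ZMod p)[X]} {t : ℕ}
    (hc : ∀ e, 1 ≤ e → e ≤ t → IsCoprime P (X ^ p ^ e - X))
    {q : (ZMod p)[X]} (hq : Irreducible q) (hd : q ∣ P) : t < q.natDegree := by
  by_contra hle
  push_neg at hle
  have h0 : 0 < q.natDegree := natDegree_pos_of_irr hq
  have key : q ∣ X ^ p ^ q.natDegree - X := dvd_X_pow_card hq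
  exact hq.not_isUnit ((hc q.natDegree h0 hle).isUnit_of_dvd' hd key)

/-! ### The explicit factor polynomials -/

noncomputable def iP1 : Polynomial ℤ := X ^ 7 + X ^ 4 + X ^ 3 + X ^ 2 + 1

noncomputable def iP2 : Polynomial ℤ := X ^ 7 + X ^ 5 + X ^ 4 + X ^ 3 + 1

noncomputable def iA : Polynomial ℤ := X ^ 4 + X ^ 3 + X ^ 2 + X + 1

noncomputable def iB : Polynomial ℤ := X ^ 10 + X ^ 9 + 2 * X ^ 8 + 2 * X ^ 7 + 2 * X ^ 6 + 2 * X ^ 4 + 2 * X ^ 3 + 2 * X ^ 2 + X + 1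

lemma hfact2 : f41half = iP1 * iP2 + 2 * (X ^ 13 + (-1) * X ^ 11 + (-3) * X ^ 10 + (-5) * X ^ 9 + (-6) * X ^ 8 + (-9) * X ^ 7 + (-6) * X ^ 6 + (-5) * X ^ 5 + (-3) * X ^ 4 + (-1) * X ^ 3 + X) := by
  unfold f41half iP1 iP2; ring

lemma hfact3 : f41half = iA * iB + 3 * ((-1) * X ^ 12 + (-2) * X ^ 11 + (-4) * X ^ 10 + (-5) * X ^ 9 + (-6) * X ^ 8 + (-7) * X ^ 7 + (-6) * X ^ 6 + (-5) * X ^ 5 + (-4) * X ^ 4 + (-2) * X ^ 3 + (-1) * X ^ 2) := by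
  unfold f41half iA iB; ring

lemma cert_P1_1 : (1) * iP1 + (X ^ 5 + X ^ 4 + X ^ 3 + X) * (X ^ 2 - X) = 1 + 2 * (X ^ 7 + X ^ 3) := by
  unfold iP1; ring

lemma cert_P1_2 : (X ^ 3 + X + 1) * iP1 + (X ^ 6 + X ^ 4 + X ^ 3 + X ^ 2 + X + 1) * (X ^ 4 - X) = 1 + 2 * (X ^ 10 + X ^ 8 + X ^ 7 + X ^ 6 + X ^ 5 + X ^ 4 + X ^ 3) := by
  unfold iP1; ring

lemma cert_P1_3 : (X ^ 5 + X ^ 4 + X ^ 3 + X + 1) * iP1 + (X ^ 4 + X ^ 3 + X ^ 2 + X + 1) * (X ^ 8 - X) = 1 + 2 * (X ^ 12 + X ^ 11 + X ^ 10 + X ^ 9 + 2 * X ^ 8 + 2 * X ^ 7 + X ^ 6 + X ^ 5 + X ^ 4 + X ^ 3) := by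
  unfold iP1; ring

lemma cert_P2_1 : (1) * iP2 + (X ^ 5 + X ^ 4 + X ^ 2) * (X ^ 2 - X) = 1 + 2 * (X ^ 7 + X ^ 4) := by
  unfold iP2; ring

lemma cert_P2_2 : (X ^ 3 + X + 1) * iP2 + (X ^ 6 + X ^ 3 + 1) * (X ^ 4 - X) = 1 + 2 * (X ^ 10 + X ^ 8 + X ^ 7 + X ^ 6 + X ^ 5 + X ^ 4 + X ^ 3) := by
  unfold iP2; ring

lemma cert_P2_3 : (X ^ 6 + X ^ 4 + X ^ 3 + X ^ 2 + 1) * iP2 + (X ^ 5 + X) * (X ^ 8 - X) = 1 + 2 * (X ^ 13 + X ^ 11 + X ^ 10 + 2 * X ^ 9 + X ^ 8 + 2 * X ^ 7 + X ^ 6 + X ^ 5 + X ^ 4 + X ^ 3) := by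
  unfold iP2; ring

lemma cert_A_1 : (2 * X ^ 2 + 2 * X + 1) * iA + (X ^ 3 + 2 * X ^ 2 + 2 * X) * (X ^ 3 - X) = 1 + 3 * (X ^ 6 + 2 * X ^ 5 + 2 * X ^ 4 + X ^ 3 + X ^ 2 + X) := by
  unfold iA; ring

lemma cert_A_2 : (X ^ 7 + X ^ 5 + X ^ 4 + X ^ 2 + 1) * iA + (2 * X ^ 2 + 2 * X + 1) * (X ^ 9 - X) = 1 + 3 * (X ^ 11 + X ^ 10 + X ^ 9 + X ^ 8 + X ^ 7 + X ^ 6 + X ^ 5 + X ^ 4) := by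
  unfold iA; ring

lemma cert_B_1 : (1) * iB + (2 * X ^ 7 + 2 * X ^ 6 + X ^ 3 + 2 * X + 1) * (X ^ 3 - X) = 1 + 3 * (X ^ 10 + X ^ 9 + X ^ 6 + X ^ 4 + X ^ 3) := by
  unfold iB; ring

lemma cert_B_2 : (2 * X ^ 8 + 2 * X ^ 5 + 2 * X ^ 4 + 2 * X ^ 3 + 2 * X ^ 2 + 2 * X + 1) * iB + (X ^ 9 + X ^ 8 + 2 * X ^ 7 + X ^ 5 + X ^ 4 + 2 * X ^ 3 + X ^ 2) * (X ^ 9 - X) = 1 + 3 * (X ^ 18 + X ^ 17 + 2 * X ^ 16 + 2 * X ^ 15 + 3 * X ^ 14 + 3 * X ^ 13 + 6 * X ^ 12 + 7 * X ^ 11 + 6 * X ^ 10 + 6 * X ^ 9 + 6 * X ^ 8 + 6 * X ^ 7 + 5 * X ^ 6 + 5 * X ^ 5 + 4 * X ^ 4 + 3 * X ^ 3 + 2 * X ^ 2 + X) := by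
  unfold iB; ring

set_option maxHeartbeats 2000000 in
lemma cert_B_3 : (X ^ 26 + 2 * X ^ 25 + X ^ 23 + X ^ 22 + X ^ 21 + X ^ 20 + X ^ 19 + 2 * X ^ 17 + 2 * X ^ 16 + 2 * X ^ 15 + X ^ 14 + 2 * X ^ 12 + 2 * X ^ 11 + X ^ 8 + 2 * X ^ 5 + 2 * X ^ 4 + X ^ 2 + 2 * X + 1) * iB + (2 * X ^ 9 + 2 * X ^ 7 + 2 * X ^ 6 + X ^ 5 + X ^ 4 + X ^ 3 + X ^ 2 + 2 * X) * (X ^ 27 - X) = 1 + 3 * (X ^ 36 + X ^ 35 + 2 * X ^ 34 + 3 * X ^ 33 + 3 * X ^ 32 + 3 * X ^ 31 + 3 * X ^ 30 + 5 * X ^ 29 + 5 * X ^ 28 + 5 * X ^ 27 + 5 * X ^ 26 + 6 * X ^ 25 + 6 * X ^ 24 + 7 * X ^ 23 + 6 * X ^ 22 + 6 * X ^ 21 + 6 * X ^ 20 + 7 * X ^ 19 + 7 * X ^ 18 + 5 * X ^ 17 + 4 * X ^ 16 + 5 * X ^ 15 + 5 * X ^ 14 + 4 * X ^ 13 + 5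 * X ^ 12 + 5 * X ^ 11 + 3 * X ^ 10 + 4 * X ^ 9 + 5 * X ^ 8 + 4 * X ^ 7 + 3 * X ^ 6 + 3 * X ^ 5 + 3 * X ^ 4 + 2 * X ^ 3 + X ^ 2 + X) := by
  unfold iB; ring

lemma fmonic : f41half.Monic := by unfold f41half; monicity!

lemma fdeg : f41half.natDegree = 14 := by unfold f41half; compute_degree!

lemma miP1 : iP1.Monic := by unfold iP1; monicity!
lemma miP2 : iP2.Monic := by unfold iP2; monicity!
lemma miA : iA.Monic := by unfold iA; monicity!
lemma miB : iB.Monic := by unfold iB; monicity!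

lemma degiP1 : iP1.natDegree = 7 := by unfold iP1; compute_degree!
lemma degiP2 : iP2.natDegree = 7 := by unfold iP2; compute_degree!
lemma degiA : iA.natDegree = 4 := by unfold iA; compute_degree!
lemma degiB : iB.natDegree = 10 := by unfold iB; compute_degree!

noncomputable def P1 : (ZMod 2)[X] := iP1.map (Int.castRingHom (ZMod 2))
noncomputable def P2 : (ZMod 2)[X] := iP2.map (Int.castRingHom (ZMod 2))
noncomputable def A3 : (ZMod 3)[X] := iA.map (Int.castRingHom (ZMod 3))
noncomputable def B3 : (ZMod 3)[X] := iB.map (Int.castRingHom (ZMod 3))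

lemma mP1 : P1.Monic := miP1.map _
lemma mP2 : P2.Monic := miP2.map _
lemma mA3 : A3.Monic := miA.map _
lemma mB3 : B3.Monic := miB.map _

lemma degP1 : P1.natDegree = 7 := by rw [P1, miP1.natDegree_map, degiP1]
lemma degP2 : P2.natDegree = 7 := by rw [P2, miP2.natDegree_map, degiP2]
lemma degA3 : A3.natDegree = 4 := by rw [A3, miA.natDegree_map, degiA]
lemma degB3 : B3.natDegree = 10 := by rw [B3, miB.natDegree_map, degiB]

lemma two_eq_zero : (2 : (ZMod 2)[X]) = 0 := by
  rw [← map_ofNat (Polynomial.C : ZMod 2 →+* (ZMod 2)[X]) 2, show (2 : ZMod 2) = 0 by decide,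
    map_zero]

lemma three_eq_zero : (3 : (ZMod 3)[X]) = 0 := by
  rw [← map_ofNat (Polynomial.C : ZMod 3 →+* (ZMod 3)[X]) 3, show (3 : ZMod 3) = 0 by decide,
    map_zero]

lemma f2eq : f41half.map (Int.castRingHom (ZMod 2)) = P1 * P2 := by
  have h := congrArg (Polynomial.map (Int.castRingHom (ZMod 2))) hfact2
  simp only [Polynomial.map_add, Polynomial.map_mul, Polynomial.map_pow, Polynomial.map_X,
    Polynomial.map_one, Polynomial.map_ofNat, Polynomial.map_neg, Polynomial.map_intCast] at h
  rw [two_eq_zero, zero_mul, add_zero] at h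
  exact h

lemma f3eq : f41half.map (Int.castRingHom (ZMod 3)) = A3 * B3 := by
  have h := congrArg (Polynomial.map (Int.castRingHom (ZMod 3))) hfact3
  simp only [Polynomial.map_add, Polynomial.map_mul, Polynomial.map_pow, Polynomial.map_X,
    Polynomial.map_one, Polynomial.map_ofNat, Polynomial.map_neg, Polynomial.map_intCast] at h
  rw [three_eq_zero, zero_mul, add_zero] at h
  exact h

lemma copP1_1 : IsCoprime P1 ((X : (ZMod 2)[X]) ^ 2 - X) := by
  have h := congrArg (Polynomial.map (Int.castRingHom (ZMod 2))) cert_P1_1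
  simp only [Polynomial.map_add, Polynomial.map_mul, Polynomial.map_sub, Polynomial.map_pow,
    Polynomial.map_X, Polynomial.map_one, Polynomial.map_ofNat] at h
  rw [two_eq_zero, zero_mul, add_zero] at h
  exact ⟨_, _, h⟩

lemma copP1_2 : IsCoprime P1 ((X : (ZMod 2)[X]) ^ 4 - X) := by
  have h := congrArg (Polynomial.map (Int.castRingHom (ZMod 2))) cert_P1_2
  simp only [Polynomial.map_add, Polynomial.map_mul, Polynomial.map_sub, Polynomial.map_pow,
    Polynomial.map_X, Polynomial.map_one, Polynomial.map_ofNat] at h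
  rw [two_eq_zero, zero_mul, add_zero] at h
  exact ⟨_, _, h⟩

lemma copP1_3 : IsCoprime P1 ((X : (ZMod 2)[X]) ^ 8 - X) := by
  have h := congrArg (Polynomial.map (Int.castRingHom (ZMod 2))) cert_P1_3
  simp only [Polynomial.map_add, Polynomial.map_mul, Polynomial.map_sub, Polynomial.map_pow,
    Polynomial.map_X, Polynomial.map_one, Polynomial.map_ofNat] at h
  rw [two_eq_zero, zero_mul, add_zero] at h
  exact ⟨_, _, h⟩

lemma copP2_1 : IsCoprime P2 ((X : (ZMod 2)[X]) ^ 2 - X) := by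
  have h := congrArg (Polynomial.map (Int.castRingHom (ZMod 2))) cert_P2_1
  simp only [Polynomial.map_add, Polynomial.map_mul, Polynomial.map_sub, Polynomial.map_pow,
    Polynomial.map_X, Polynomial.map_one, Polynomial.map_ofNat] at h
  rw [two_eq_zero, zero_mul, add_zero] at h
  exact ⟨_, _, h⟩

lemma copP2_2 : IsCoprime P2 ((X : (ZMod 2)[X]) ^ 4 - X) := by
  have h := congrArg (Polynomial.map (Int.castRingHom (ZMod 2))) cert_P2_2
  simp only [Polynomial.map_add, Polynomial.map_mul, Polynomial.map_sub, Polynomial.map_pow,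
    Polynomial.map_X, Polynomial.map_one, Polynomial.map_ofNat] at h
  rw [two_eq_zero, zero_mul, add_zero] at h
  exact ⟨_, _, h⟩

lemma copP2_3 : IsCoprime P2 ((X : (ZMod 2)[X]) ^ 8 - X) := by
  have h := congrArg (Polynomial.map (Int.castRingHom (ZMod 2))) cert_P2_3
  simp only [Polynomial.map_add, Polynomial.map_mul, Polynomial.map_sub, Polynomial.map_pow,
    Polynomial.map_X, Polynomial.map_one, Polynomial.map_ofNat] at h
  rw [two_eq_zero, zero_mul, add_zero] at h
  exact ⟨_, _, h⟩

lemma copA_1 : IsCoprime A3 ((X : (ZMod 3)[X]) ^ 3 - X) := by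
  have h := congrArg (Polynomial.map (Int.castRingHom (ZMod 3))) cert_A_1
  simp only [Polynomial.map_add, Polynomial.map_mul, Polynomial.map_sub, Polynomial.map_pow,
    Polynomial.map_X, Polynomial.map_one, Polynomial.map_ofNat] at h
  rw [three_eq_zero, zero_mul, add_zero] at h
  exact ⟨_, _, h⟩

lemma copA_2 : IsCoprime A3 ((X : (ZMod 3)[X]) ^ 9 - X) := by
  have h := congrArg (Polynomial.map (Int.castRingHom (ZMod 3))) cert_A_2
  simp only [Polynomial.map_add, Polynomial.map_mul, Polynomial.map_sub, Polynomial.map_pow,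
    Polynomial.map_X, Polynomial.map_one, Polynomial.map_ofNat] at h
  rw [three_eq_zero, zero_mul, add_zero] at h
  exact ⟨_, _, h⟩

lemma copB_1 : IsCoprime B3 ((X : (ZMod 3)[X]) ^ 3 - X) := by
  have h := congrArg (Polynomial.map (Int.castRingHom (ZMod 3))) cert_B_1
  simp only [Polynomial.map_add, Polynomial.map_mul, Polynomial.map_sub, Polynomial.map_pow,
    Polynomial.map_X, Polynomial.map_one, Polynomial.map_ofNat] at h
  rw [three_eq_zero, zero_mul, add_zero] at h
  exact ⟨_, _, h⟩

lemma copB_2 : IsCoprime B3 ((X : (ZMod 3)[X]) ^ 9 - X) := by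
  have h := congrArg (Polynomial.map (Int.castRingHom (ZMod 3))) cert_B_2
  simp only [Polynomial.map_add, Polynomial.map_mul, Polynomial.map_sub, Polynomial.map_pow,
    Polynomial.map_X, Polynomial.map_one, Polynomial.map_ofNat] at h
  rw [three_eq_zero, zero_mul, add_zero] at h
  exact ⟨_, _, h⟩

lemma copB_3 : IsCoprime B3 ((X : (ZMod 3)[X]) ^ 27 - X) := by
  have h := congrArg (Polynomial.map (Int.castRingHom (ZMod 3))) cert_B_3
  simp only [Polynomial.map_add, Polynomial.map_mul, Polynomial.map_sub, Polynomial.map_pow,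
    Polynomial.map_X, Polynomial.map_one, Polynomial.map_ofNat] at h
  rw [three_eq_zero, zero_mul, add_zero] at h
  exact ⟨_, _, h⟩

lemma P1_big {q : (ZMod 2)[X]} (hq : Irreducible q) (hd : q ∣ P1) : 3 < q.natDegree := by
  refine factors_big (t := 3) ?_ hq hd
  intro e h1 h3
  interval_cases e
  · rw [show (2 : ℕ) ^ 1 = 2 by norm_num]; exact copP1_1
  · rw [show (2 : ℕ) ^ 2 = 4 by norm_num]; exact copP1_2
  · rw [show (2 : ℕ) ^ 3 = 8 by norm_num]; exact copP1_3

lemma P2_big {q : (ZMod 2)[X]} (hq : Irreducible q) (hd : q ∣ P2) : 3 < q.natDegree := by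
  refine factors_big (t := 3) ?_ hq hd
  intro e h1 h3
  interval_cases e
  · rw [show (2 : ℕ) ^ 1 = 2 by norm_num]; exact copP2_1
  · rw [show (2 : ℕ) ^ 2 = 4 by norm_num]; exact copP2_2
  · rw [show (2 : ℕ) ^ 3 = 8 by norm_num]; exact copP2_3

lemma A3_big {q : (ZMod 3)[X]} (hq : Irreducible q) (hd : q ∣ A3) : 2 < q.natDegree := by
  refine factors_big (t := 2) ?_ hq hd
  intro e h1 h2
  interval_cases e
  · rw [show (3 : ℕ) ^ 1 = 3 by norm_num]; exact copA_1
  · rw [show (3 : ℕ) ^ 2 = 9 by norm_num]; exact copA_2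

lemma B3_big {q : (ZMod 3)[X]} (hq : Irreducible q) (hd : q ∣ B3) : 3 < q.natDegree := by
  refine factors_big (t := 3) ?_ hq hd
  intro e h1 h3
  interval_cases e
  · rw [show (3 : ℕ) ^ 1 = 3 by norm_num]; exact copB_1
  · rw [show (3 : ℕ) ^ 2 = 9 by norm_num]; exact copB_2
  · rw [show (3 : ℕ) ^ 3 = 27 by norm_num]; exact copB_3

lemma irrP1 : Irreducible P1 :=
  irreducible_of_big_factors mP1 (n := 7) (t := 3) degP1 (by norm_num) (by norm_num)
    (fun q hq hd => P1_big hq hd)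

lemma irrP2 : Irreducible P2 :=
  irreducible_of_big_factors mP2 (n := 7) (t := 3) degP2 (by norm_num) (by norm_num)
    (fun q hq hd => P2_big hq hd)

lemma irrA3 : Irreducible A3 :=
  irreducible_of_big_factors mA3 (n := 4) (t := 2) degA3 (by norm_num) (by norm_num)
    (fun q hq hd => A3_big hq hd)

lemma P1_ne_P2 : P1 ≠ P2 := by
  intro h
  have h1 : iP1.coeff 2 = 1 := by unfold iP1; simp [Polynomial.coeff_one]
  have h2 : iP2.coeff 2 = 0 := by unfold iP2; simp [Polynomial.coeff_one]
  have := congrArg (fun r => r.coeff 2) h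
  simp only [P1, P2, Polynomial.coeff_map, h1, h2] at this
  simp at this

lemma P1_not_dvd_P2 : ¬ P1 ∣ P2 := fun h =>
  P1_ne_P2 (Polynomial.eq_of_monic_of_associated mP1 mP2 (irrP1.associated_of_dvd irrP2 h))

lemma B3_no_deg3 {c : (ZMod 3)[X]} (hc : c ∣ B3) (h3 : c.natDegree = 3) : False := by
  have hB0 : B3 ≠ 0 := mB3.ne_zero
  have hc0 : c ≠ 0 := by rintro rfl; rw [zero_dvd_iff] at hc; exact hB0 hc
  have hcu : ¬ IsUnit c := by
    intro h
    have := Polynomial.natDegree_eq_zero_of_isUnit h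
    omega
  obtain ⟨q, hqi, hqd⟩ := WfDvdMonoid.exists_irreducible_factor hcu hc0
  have h1 := B3_big hqi (hqd.trans hc)
  have h2 := Polynomial.natDegree_le_of_dvd hqd hc0
  omega

lemma no_deg7 {d e : (ZMod 3)[X]} (hde : d * e = A3 * B3) (hd7 : d.natDegree = 7)
    (he7 : e.natDegree = 7) : False := by
  have hA0 : A3 ≠ 0 := mA3.ne_zero
  have hprime : Prime A3 := irrA3.prime
  have hdvd : A3 ∣ d * e := ⟨B3, hde⟩
  rcases hprime.2.2 _ _ hdvd with hA | hA
  · obtain ⟨c, rfl⟩ := hA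
    have hc0 : c ≠ 0 := by rintro rfl; rw [mul_zero] at hd7; simp at hd7
    have hdc : c.natDegree = 3 := by
      rw [Polynomial.natDegree_mul hA0 hc0, degA3] at hd7; omega
    refine B3_no_deg3 ⟨e, ?_⟩ hdc
    have h2 : A3 * (c * e) = A3 * B3 := by rw [← mul_assoc, hde]
    exact (mul_left_cancel₀ hA0 h2).symm
  · obtain ⟨c, rfl⟩ := hA
    have hc0 : c ≠ 0 := by rintro rfl; rw [mul_zero] at he7; simp at he7
    have hdc : c.natDegree = 3 := by
      rw [Polynomial.natDegree_mul hA0 hc0, degA3] at he7; omega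
    refine B3_no_deg3 ⟨d, ?_⟩ hdc
    have h2 : A3 * (c * d) = A3 * B3 := by rw [← hde]; ring
    exact (mul_left_cancel₀ hA0 h2).symm

lemma f_irred : Irreducible f41half := by
  constructor
  · intro hu
    have h := Polynomial.natDegree_eq_zero_of_isUnit hu
    rw [fdeg] at h
    omega
  intro a b hab
  by_contra hcon
  push_neg at hcon
  obtain ⟨hau, hbu⟩ := hcon
  have hf0 : f41half ≠ 0 := fmonic.ne_zero
  have ha0 : a ≠ 0 := by rintro rfl; rw [zero_mul] at hab; exact hf0 hab
  have hb0 : b ≠ 0 := by rintro rfl; rw [mul_zero] at hab; exact hf0 hab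
  have hlc : a.leadingCoeff * b.leadingCoeff = 1 := by
    have h := fmonic
    rw [Polynomial.Monic, hab, Polynomial.leadingCoeff_mul] at h
    exact h
  have hua : IsUnit a.leadingCoeff := IsUnit.of_mul_eq_one _ hlc
  have hub : IsUnit b.leadingCoeff := IsUnit.of_mul_eq_one _ (by rwa [mul_comm] at hlc)
  have hda : 0 < a.natDegree := by
    rcases Nat.eq_zero_or_pos a.natDegree with h | h
    · exfalso
      apply hau
      rw [Polynomial.eq_C_of_natDegree_eq_zero h]
      refine Polynomial.isUnit_C.mpr ?_
      rwa [Polynomial.leadingCoeff, h] at hua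
    · exact h
  have hdb : 0 < b.natDegree := by
    rcases Nat.eq_zero_or_pos b.natDegree with h | h
    · exfalso
      apply hbu
      rw [Polynomial.eq_C_of_natDegree_eq_zero h]
      refine Polynomial.isUnit_C.mpr ?_
      rwa [Polynomial.leadingCoeff, h] at hub
    · exact h
  have hsum : a.natDegree + b.natDegree = 14 := by
    rw [← fdeg, hab, Polynomial.natDegree_mul ha0 hb0]
  -- reductions mod 2
  have hlc2a : (Int.castRingHom (ZMod 2)) a.leadingCoeff ≠ 0 := by
    rcases Int.isUnit_iff.mp hua with h | h <;> rw [h] <;> decide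
  have hlc2b : (Int.castRingHom (ZMod 2)) b.leadingCoeff ≠ 0 := by
    rcases Int.isUnit_iff.mp hub with h | h <;> rw [h] <;> decide
  have hlc3a : (Int.castRingHom (ZMod 3)) a.leadingCoeff ≠ 0 := by
    rcases Int.isUnit_iff.mp hua with h | h <;> rw [h] <;> decide
  have hlc3b : (Int.castRingHom (ZMod 3)) b.leadingCoeff ≠ 0 := by
    rcases Int.isUnit_iff.mp hub with h | h <;> rw [h] <;> decide
  have hda2 : (a.map (Int.castRingHom (ZMod 2))).natDegree = a.natDegree :=
    Polynomial.natDegree_map_of_leadingCoeff_ne_zero _ hlc2a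
  have hdb2 : (b.map (Int.castRingHom (ZMod 2))).natDegree = b.natDegree :=
    Polynomial.natDegree_map_of_leadingCoeff_ne_zero _ hlc2b
  have ha2 : a.map (Int.castRingHom (ZMod 2)) ≠ 0 := by
    intro h
    apply hlc2a
    rw [Polynomial.leadingCoeff, ← Polynomial.coeff_map, h, Polynomial.coeff_zero]
  have hb2 : b.map (Int.castRingHom (ZMod 2)) ≠ 0 := by
    intro h
    apply hlc2b
    rw [Polynomial.leadingCoeff, ← Polynomial.coeff_map, h, Polynomial.coeff_zero]
  have hmul2 : (a.map (Int.castRingHom (ZMod 2))) * (b.map (Int.castRingHom (ZMod 2)))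
      = P1 * P2 := by
    rw [← Polynomial.map_mul, ← hab, f2eq]
  -- the key degree-7 contradiction via mod 3
  have key : a.natDegree = 7 → False := by
    intro h7a
    have h7b : b.natDegree = 7 := by omega
    have hda3 : (a.map (Int.castRingHom (ZMod 3))).natDegree = 7 := by
      rw [Polynomial.natDegree_map_of_leadingCoeff_ne_zero _ hlc3a, h7a]
    have hdb3 : (b.map (Int.castRingHom (ZMod 3))).natDegree = 7 := by
      rw [Polynomial.natDegree_map_of_leadingCoeff_ne_zero _ hlc3b, h7b]
    have hmul3 : (a.map (Int.castRingHom (ZMod 3))) * (b.map (Int.castRingHom (ZMod 3)))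
        = A3 * B3 := by
      rw [← Polynomial.map_mul, ← hab, f3eq]
    exact no_deg7 hmul3 hda3 hdb3
  have hp1 : Prime P1 := irrP1.prime
  have hp2 : Prime P2 := irrP2.prime
  have hd1 : P1 ∣ (a.map (Int.castRingHom (ZMod 2))) * (b.map (Int.castRingHom (ZMod 2))) := by
    rw [hmul2]; exact dvd_mul_right _ _
  have hd2 : P2 ∣ (a.map (Int.castRingHom (ZMod 2))) * (b.map (Int.castRingHom (ZMod 2))) := by
    rw [hmul2]; exact dvd_mul_left _ _
  have hP1P2deg : (P1 * P2).natDegree = 14 := by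
    rw [Polynomial.natDegree_mul mP1.ne_zero mP2.ne_zero, degP1, degP2]
  rcases hp1.2.2 _ _ hd1 with h1 | h1 <;> rcases hp2.2.2 _ _ hd2 with h2 | h2
  · -- both divide a-bar
    obtain ⟨c, hc⟩ := h2
    have h1' : P1 ∣ P2 * c := hc ▸ h1
    rcases hp1.2.2 _ _ h1' with hx | hx
    · exact P1_not_dvd_P2 hx
    · obtain ⟨d, hd⟩ := hx
      have h12 : P1 * P2 ∣ a.map (Int.castRingHom (ZMod 2)) := ⟨d, by rw [hc, hd]; ring⟩
      have hle := Polynomial.natDegree_le_of_dvd h12 ha2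
      rw [hP1P2deg, hda2] at hle
      omega
  · -- P1 ∣ a-bar, P2 ∣ b-bar : degrees 7 and 7
    have l1 := Polynomial.natDegree_le_of_dvd h1 ha2
    have l2 := Polynomial.natDegree_le_of_dvd h2 hb2
    rw [degP1, hda2] at l1
    rw [degP2, hdb2] at l2
    exact key (by omega)
  · -- P2 ∣ a-bar, P1 ∣ b-bar
    have l1 := Polynomial.natDegree_le_of_dvd h2 ha2
    have l2 := Polynomial.natDegree_le_of_dvd h1 hb2
    rw [degP2, hda2] at l1
    rw [degP1, hdb2] at l2
    exact key (by omega)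
  · -- both divide b-bar
    obtain ⟨c, hc⟩ := h2
    have h1' : P1 ∣ P2 * c := hc ▸ h1
    rcases hp1.2.2 _ _ h1' with hx | hx
    · exact P1_not_dvd_P2 hx
    · obtain ⟨d, hd⟩ := hx
      have h12 : P1 * P2 ∣ b.map (Int.castRingHom (ZMod 2)) := ⟨d, by rw [hc, hd]; ring⟩
      have hle := Polynomial.natDegree_le_of_dvd h12 hb2
      rw [hP1P2deg, hdb2] at hle
      omega

lemma f_irredQ : Irreducible (f41half.map (Int.castRingHom ℚ)) :=
  (Polynomial.IsPrimitive.Int.irreducible_iff_irreducible_map_cast fmonic.isPrimitive).mp f_irred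

lemma part2 (α : ℂ) (hα : Polynomial.aeval α f41half = 0) : ¬ IsIntegral ℤ (α - 1)⁻¹ := by
  intro hint
  have hα1 : α ≠ 1 := by
    rintro rfl
    rw [f41half] at hα
    simp [map_ofNat] at hα
    norm_num at hα
  have hβ0 : α - 1 ≠ 0 := sub_ne_zero.mpr hα1
  obtain ⟨q, hqm, hq0⟩ := hint
  rw [← Polynomial.aeval_def] at hq0
  set n := q.natDegree with hn
  set r : ℤ[X] := ∑ i ∈ Finset.range (n + 1), C (q.coeff i) * X ^ (n - i) with hr
  have haevalr : Polynomial.aeval (α - 1) r = 0 := by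
    have hqsum : Polynomial.aeval ((α - 1)⁻¹) q
        = ∑ i ∈ Finset.range (n + 1), (q.coeff i : ℂ) * ((α - 1)⁻¹) ^ i := by
      rw [Polynomial.aeval_eq_sum_range]
      simp [zsmul_eq_mul, hn]
    have hkey : Polynomial.aeval (α - 1) r = (α - 1) ^ n * Polynomial.aeval ((α - 1)⁻¹) q := by
      rw [hr, map_sum, hqsum, Finset.mul_sum]
      refine Finset.sum_congr rfl ?_
      intro i hi
      rw [Finset.mem_range] at hi
      have hle : i ≤ n := by omega
      rw [map_mul, Polynomial.aeval_C, map_pow, Polynomial.aeval_X]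
      have hpow : (α - 1) ^ n * ((α - 1)⁻¹) ^ i = (α - 1) ^ (n - i) := by
        rw [inv_pow, mul_inv_eq_iff_eq_mul₀ (pow_ne_zero _ hβ0), ← pow_add]
        congr 1
        omega
      rw [← hpow]
      simp only [algebraMap_int_eq, eq_intCast]
      ring
    rw [hkey, hq0, mul_zero]
  have hs : Polynomial.aeval α (r.comp (X - 1)) = 0 := by
    rw [Polynomial.aeval_comp]
    have : Polynomial.aeval α ((X : ℤ[X]) - 1) = α - 1 := by simp
    rw [this]
    exact haevalr
  have hαint : IsIntegral ℤ α := ⟨f41half, fmonic, by rw [← Polynomial.aeval_def]; exact hα⟩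
  have hmin : minpoly ℤ α = f41half := by
    have h1 : minpoly ℚ α = f41half.map (algebraMap ℤ ℚ) := by
      refine (minpoly.eq_of_irreducible_of_monic ?_ ?_ ?_).symm
      · rw [algebraMap_int_eq]; exact f_irredQ
      · rw [Polynomial.aeval_map_algebraMap]; exact hα
      · exact fmonic.map _
    have h2 := minpoly.isIntegrallyClosed_eq_field_fractions' ℚ hαint
    rw [h1] at h2
    have hinj : Function.Injective (algebraMap ℤ ℚ) := fun x y hxy => by
      rwa [algebraMap_int_eq, eq_intCast, eq_intCast, Int.cast_inj] at hxy
    exact (Polynomial.map_injective _ hinj h2.symm)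
  have hdvd : f41half ∣ r.comp (X - 1) := by
    rw [← hmin]
    exact minpoly.isIntegrallyClosed_dvd hαint hs
  have heval : Polynomial.eval 1 f41half ∣ Polynomial.eval 1 (r.comp (X - 1)) :=
    Polynomial.eval_dvd hdvd
  have hf1 : Polynomial.eval 1 f41half = -49 := by
    rw [f41half]; simp [Polynomial.eval_ofNat]
  have hr1 : Polynomial.eval 1 (r.comp (X - 1)) = 1 := by
    rw [Polynomial.eval_comp]
    have h0 : Polynomial.eval 1 ((X : ℤ[X]) - 1) = 0 := by simp
    rw [h0, hr, Polynomial.eval_finset_sum]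
    rw [Finset.sum_eq_single n]
    · simp [Nat.sub_self, hn, hqm.coeff_natDegree]
    · intro i hi hne
      rw [Finset.mem_range] at hi
      have : 0 < n - i := by omega
      simp [Polynomial.eval_mul, Polynomial.eval_pow, zero_pow (by omega : n - i ≠ 0)]
    · intro h
      exact absurd (Finset.self_mem_range_succ n) h
  rw [hf1, hr1] at heval
  norm_num at heval

end F41Aux

/-- `f41half` is irreducible over `ℚ`, and for every complex root `α` of it,
`(α - 1)⁻¹` is not an algebraic integer. -/
theorem f41half_irreducible_and_not_integral :
    Irreducible (f41half.map (Int.castRingHom ℚ)) ∧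
      ∀ α : ℂ, Polynomial.aeval α f41half = 0 → ¬ IsIntegral ℤ (α - 1)⁻¹ := by
  exact ⟨F41Aux.f_irredQ, fun α hα => F41Aux.part2 α hα⟩
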